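/- Schwartz–Zippel for decompositions: Let P : F_q^n → F_q be a nonzero polynomial of degree at most d, and suppose P = F(X_1,...,X_k) for some polynomial F : F_q^k → F_q and polynomial map X = (X_1,...,X_k) : F_q^n → F_q^k. Then there exists y ∈ F_q^k such that F(y) ≠ 0 and Pr_{z ∈ F_q^k}[F(z) ≠ 0] · Pr_{x ∈ F_q^n}[X(x) = y] ≥ (1 − d/q) q^{-k}. -/

import Mathlib

open MvPolynomial
open scoped BigOperators

namespace PaperDefs

variable (F : Type) [Field F] [Fintype F] [DecidableEq F]

/-- A multivariate polynomial is *reduced* if every variable occurs with degree at most `|F| - 1`.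
Over a finite field, every function `F^n → F` has a unique reduced polynomial representative. -/
def ReducedPoly {n : ℕ} (P : MvPolynomial (Fin n) F) : Prop :=
  ∀ i, P.degreeOf i ≤ Fintype.card F - 1

/-- `P` represents the function `f`. -/
def Represents {n : ℕ} (P : MvPolynomial (Fin n) F) (f : (Fin n → F) → F) : Prop :=
  ∀ x, MvPolynomial.eval x P = f x

/-- Degree of a polynomial function: total degree of its (unique) reduced representative. -/
noncomputable def degF {n : ℕ} (f : (Fin n → F) → F) : ℕ :=
  sInf {d | ∃ P : MvPolynomial (Fin n) F, ReducedPoly F P ∧ Represents F P f ∧ P.totalDegree = d}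

/-- `f` is a form (homogeneous polynomial function) of degree `d ≥ 1`. -/
def IsFormOfDegree {n : ℕ} (f : (Fin n → F) → F) (d : ℕ) : Prop :=
  0 < d ∧ ∃ P : MvPolynomial (Fin n) F, P ≠ 0 ∧ ReducedPoly F P ∧
    P.IsHomogeneous d ∧ Represents F P f

/-- `f` is a form: a homogeneous polynomial function of positive degree. -/
def IsForm {n : ℕ} (f : (Fin n → F) → F) : Prop := ∃ d, IsFormOfDegree F f d

/-- A function is non-constant. -/
def NonConstantFn {α β : Type*} (f : α → β) : Prop := ¬ ∃ c, ∀ x, f x = c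

/-- A polynomial function is reducible if it is a product of two non-constant polynomial
functions. -/
def ReduciblePoly {n : ℕ} (f : (Fin n → F) → F) : Prop :=
  ∃ g h : (Fin n → F) → F, NonConstantFn g ∧ NonConstantFn h ∧ ∀ x, f x = g x * h x

/-- Rank of a form of degree `d`: the least `r` such that the form is a sum of `r` reducible
forms of degree `d`; `∞` for `d ≤ 1`. -/
noncomputable def rkFormD {n : ℕ} (d : ℕ) (f : (Fin n → F) → F) : ℕ∞ :=
  if d ≤ 1 then ⊤ else
    sInf {r : ℕ∞ | ∃ k : ℕ, r = (k : ℕ∞) ∧ ∃ R : Fin k → (Fin n → F) → F,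
      (∀ i, IsFormOfDegree F (R i) d ∧ ReduciblePoly F (R i)) ∧ ∀ x, f x = ∑ i, R i x}

/-- Rank of a general polynomial function: the rank of the highest-degree homogeneous part of
its reduced representative (`0` for constants). -/
noncomputable def rkFun {n : ℕ} (f : (Fin n → F) → F) : ℕ∞ :=
  sInf {r : ℕ∞ | ∃ P : MvPolynomial (Fin n) F, ReducedPoly F P ∧ Represents F P f ∧
    r = if P.totalDegree = 0 then 0 else
      rkFormD F P.totalDegree
        (fun x => MvPolynomial.eval x ((MvPolynomial.homogeneousComponent P.totalDegree) P))}

/-- `U_R(V)`: the span of the polynomials in `V` of rank less than `R`. -/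
noncomputable def lowRankSpan {n : ℕ} (V : Submodule F ((Fin n → F) → F)) (R : ℕ) :
    Submodule F ((Fin n → F) → F) :=
  Submodule.span F {f | f ∈ V ∧ rkFun F f < (R : ℕ∞)}

/-- Degree of a subspace of polynomial functions: the largest degree of any of its members. -/
noncomputable def degSub {n : ℕ} (W : Submodule F ((Fin n → F) → F)) : ℕ :=
  sSup (degF F '' (W : Set ((Fin n → F) → F)))

/-- A subspace of polynomial functions is homogeneous if it is spanned by forms. -/
def IsHomogeneousSub {n : ℕ} (W : Submodule F ((Fin n → F) → F)) : Prop :=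
  ∃ S : Set ((Fin n → F) → F), (∀ f ∈ S, IsForm F f) ∧ W = Submodule.span F S

/-- `V^↑`: the top-degree homogeneous component of `V` (the subspace consisting of `0`
together with the forms in `V` of degree `deg(V)`). -/
noncomputable def topComponent {n : ℕ} (V : Submodule F ((Fin n → F) → F)) :
    Submodule F ((Fin n → F) → F) :=
  Submodule.span F {f | f ∈ V ∧ IsFormOfDegree F f (degSub F V)}

/-- `f ∈ F[X]`: `f` is a polynomial expression in `X₁, …, X_k`. -/
def InAlg {n k : ℕ} (X : Fin k → (Fin n → F) → F) (f : (Fin n → F) → F) : Prop :=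
  ∃ G : MvPolynomial (Fin k) F, ∀ x, MvPolynomial.eval (fun i => X i x) G = f x

/-- `Pr[X = y]` over a uniformly random input of `F^n`. -/
noncomputable def prEq {n k : ℕ} (X : Fin k → (Fin n → F) → F) (y : Fin k → F) : ℝ :=
  (Nat.card {x : Fin n → F // ∀ i, X i x = y i} : ℝ) / (Fintype.card F : ℝ) ^ n

/-- `Pr[X ∈ S]` over a uniformly random input of `F^n`. -/
noncomputable def prMem {n k : ℕ} (X : Fin k → (Fin n → F) → F) (S : Set (Fin k → F)) : ℝ :=
  (Nat.card {x : Fin n → F // (fun i => X i x) ∈ S} : ℝ) / (Fintype.card F : ℝ) ^ n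

/-- A tuple `X = (X₀, X₁, …, X_k)` of forms is weak `ε`-regular: `X₀` has maximal degree and
for every `y`, `|Pr[X = y] - q⁻¹ Pr[X' = y']| ≤ ε q^{-(k+1)}`, where `X' = (X₁, …, X_k)`. -/
def WeakRegular {n k : ℕ} (ε : ℝ) (X : Fin (k + 1) → (Fin n → F) → F) : Prop :=
  (∀ i, IsForm F (X i)) ∧
  (∀ i, degF F (X i) ≤ degF F (X 0)) ∧
  ∀ y : Fin (k + 1) → F,
    |prEq F X y -
      (Fintype.card F : ℝ)⁻¹ * prEq F (fun i : Fin k => X i.succ) (fun i : Fin k => y i.succ)|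
      ≤ ε / (Fintype.card F : ℝ) ^ (k + 1)

/-- The bias of a polynomial function with respect to an additive character `χ`. -/
noncomputable def biasF {n : ℕ} (χ : AddChar F ℂ) (f : (Fin n → F) → F) : ℂ :=
  (∑ x : Fin n → F, χ (f x)) / (Fintype.card F : ℂ) ^ n

/-- A tuple of forms `X = (X₁, …, X_r)` is `t`-rank-regular: every element of `Span(X)`
outside of some strict subspace has rank at least `t · r`. -/
def RankRegular {n r : ℕ} (t : ℕ) (X : Fin r → (Fin n → F) → F) : Prop :=
  ∃ U : Submodule F ((Fin n → F) → F), U < Submodule.span F (Set.range X) ∧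
    ∀ f ∈ Submodule.span F (Set.range X), f ∉ U → ((t * r : ℕ) : ℕ∞) ≤ rkFun F f

/-- `P ⊆ F[X]` is a minimal decomposition: no strict subspace of `Span(X)` spanned by forms
generates `P`. -/
def MinimalDecomp {n m r : ℕ} (P : Fin m → (Fin n → F) → F)
    (X : Fin r → (Fin n → F) → F) : Prop :=
  (∀ i, InAlg F X (P i)) ∧
  ∀ (k : ℕ) (Y : Fin k → (Fin n → F) → F), (∀ j, IsForm F (Y j)) →
    Submodule.span F (Set.range Y) < Submodule.span F (Set.range X) →
    ¬ ∀ i, InAlg F Y (P i)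

/-- Degree of a univariate polynomial function: the degree of its reduced representative
(in which the variable has degree at most `|F| - 1`). -/
noncomputable def degU (u : F → F) : ℕ :=
  sInf {d | ∃ p : Polynomial F, p.natDegree ≤ Fintype.card F - 1 ∧ (∀ x, p.eval x = u x) ∧
    p.natDegree = d}

/-- Univariate degree of a polynomial map `P : F^n → F^m`: the minimum degree of a
non-constant univariate polynomial curve whose image is contained in the image of `P`
(`∞` if no such curve exists, e.g. for constant maps). -/
noncomputable def udeg {n m : ℕ} (P : Fin m → (Fin n → F) → F) : ℕ∞ :=
  sInf {d : ℕ∞ | ∃ U : Fin m → F → F,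
    NonConstantFn (fun t => fun i => U i t) ∧
    Set.range (fun t => fun i => U i t) ⊆ Set.range (fun x => fun i => P i x) ∧
    d = ((Finset.univ.sup fun i => degU F (U i) : ℕ) : ℕ∞)}

/-- Univariate degree of a single polynomial function `P : F^n → F`. -/
noncomputable def udeg1 {n : ℕ} (f : (Fin n → F) → F) : ℕ∞ :=
  sInf {d : ℕ∞ | ∃ u : F → F, NonConstantFn u ∧ Set.range u ⊆ Set.range f ∧
    d = ((degU F u : ℕ) : ℕ∞)}

/-- `f` is `t`-reducible: a product of polynomial functions each of degree at most `t`. -/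
def TReducible {n : ℕ} (t : ℝ) (f : (Fin n → F) → F) : Prop :=
  ∃ (s : ℕ) (g : Fin s → (Fin n → F) → F), (∀ j, (degF F (g j) : ℝ) ≤ t) ∧
    ∀ x, f x = ∏ j, g j x

/-- The line in `F^(k+1)` through `z` in direction `e₁`. -/
def lineE1 {k : ℕ} (z : Fin (k + 1) → F) : Set (Fin (k + 1) → F) :=
  {y | ∃ t : F, y = t • (Pi.single (0 : Fin (k + 1)) (1 : F) : Fin (k + 1) → F) + z}


/-- **Schwartz–Zippel for decompositions.** If a nonzero polynomial `P` of degree at most `d`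
satisfies `P = G(X₁, …, X_k)`, then there is `y ∈ F^k` with `G(y) ≠ 0` and
`Pr[G ≠ 0] · Pr[X = y] ≥ (1 - d/q) q^{-k}`. -/
lemma sz_aux : ∀ (n : ℕ) (Q : MvPolynomial (Fin n) F), Q ≠ 0 →
    (Finset.univ.filter fun x : Fin n → F => eval x Q = 0).card * Fintype.card F
      ≤ Q.totalDegree * (Fintype.card F) ^ n := by
  intro n
  induction n with
  | zero =>
    intro Q hQ
    have he : (Finset.univ.filter fun x : Fin 0 → F => eval x Q = 0) = ∅ := by
      rw [Finset.filter_eq_empty_iff]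
      intro x _
      have hQC : Q = C (constantCoeff Q) := (eq_C_of_isEmpty Q)
      rw [hQC, eval_C]
      intro h0
      exact hQ (by rw [hQC, h0, map_zero])
    rw [he]
    simp
  | succ m ih =>
    intro Q hQ
    set q := Fintype.card F with hq
    set p := finSuccEquiv F m Q with hp_def
    have hp : p ≠ 0 := by
      simp only [hp_def, ne_eq, map_eq_zero_iff _ (AlgEquiv.injective _)]
      exact hQ
    set t := p.natDegree with ht
    set c := p.leadingCoeff with hc_def
    have hc : c ≠ 0 := Polynomial.leadingCoeff_ne_zero.mpr hp
    have hdegc : c.totalDegree + t ≤ Q.totalDegree := by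
      apply totalDegree_coeff_finSuccEquiv_add_le
      exact hc
    -- count via sigma over the tail
    have hcard : (Finset.univ.filter fun x : Fin (m+1) → F => eval x Q = 0).card
        = ∑ s : Fin m → F, (Finset.univ.filter fun y : F =>
            Polynomial.eval y (Polynomial.map (eval s) p) = 0).card := by
      rw [← Fintype.card_subtype]
      have e1 : {x : Fin (m+1) → F // eval x Q = 0} ≃
          Σ s : Fin m → F, {y : F // Polynomial.eval y (Polynomial.map (eval s) p) = 0} := by
        refine Equiv.trans ?_ (Equiv.subtypeProdEquivSigmaSubtype
          (fun (s : Fin m → F) (y : F) => Polynomial.eval y (Polynomial.map (eval s) p) = 0))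
        refine Equiv.subtypeEquiv ((Fin.consEquiv fun _ : Fin (m+1) => F).symm.trans
          (Equiv.prodComm _ _)) ?_
        intro x
        have : x = Fin.cons (x 0) (fun i => x i.succ) := by
          ext i; exact (Fin.cons_self_tail x ▸ rfl)
        constructor
        · intro h
          simpa using (by
            rw [← eval_eq_eval_mv_eval']
            rw [← Fin.cons_self_tail x]  at h
            exact h : Polynomial.eval (x 0) (Polynomial.map (eval (Fin.tail x)) p) = 0)
        · intro h
          rw [← Fin.cons_self_tail x, eval_eq_eval_mv_eval']
          exact h
      rw [Fintype.card_congr e1, Fintype.card_sigma]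
      exact Finset.sum_congr rfl fun s _ => Fintype.card_subtype _
    rw [hcard]
    have hbound : ∀ s : Fin m → F,
        (Finset.univ.filter fun y : F => Polynomial.eval y (Polynomial.map (eval s) p) = 0).card
          ≤ if eval s c = 0 then q else t := by
      intro s
      by_cases hs : eval s c = 0
      · simp only [hs, if_true]
        exact (Finset.card_filter_le _ _).trans (by simp [hq])
      · simp only [hs, if_false]
        set ps := Polynomial.map (eval s) p with hps_def
        have hps : ps ≠ 0 := by
          intro h0
          apply hs
          have : ps.coeff t = eval s (p.coeff t) := Polynomial.coeff_map _ _
          rw [h0, Polynomial.coeff_zero] at this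
          exact (this.symm : eval s c = 0)
        have hsub : (Finset.univ.filter fun y : F => Polynomial.eval y ps = 0)
            ⊆ ps.roots.toFinset := by
          intro y hy
          simp only [Finset.mem_filter] at hy
          rw [Multiset.mem_toFinset, Polynomial.mem_roots hps]
          exact hy.2
        calc (Finset.univ.filter fun y : F => Polynomial.eval y ps = 0).card
            ≤ ps.roots.toFinset.card := Finset.card_le_card hsub
          _ ≤ Multiset.card ps.roots := Multiset.toFinset_card_le _
          _ ≤ ps.natDegree := (Polynomial.card_roots' ps)
          _ ≤ t := Polynomial.natDegree_map_le
    set Z := (Finset.univ.filter fun s : Fin m → F => eval s c = 0).card with hZ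
    have hZq : Z * q ≤ c.totalDegree * q ^ m := ih c hc
    have hsum : ∑ s : Fin m → F, (Finset.univ.filter fun y : F =>
          Polynomial.eval y (Polynomial.map (eval s) p) = 0).card
        ≤ Z * q + q ^ m * t := by
      calc ∑ s : Fin m → F, (Finset.univ.filter fun y : F =>
              Polynomial.eval y (Polynomial.map (eval s) p) = 0).card
          ≤ ∑ s : Fin m → F, (if eval s c = 0 then q else t) :=
            Finset.sum_le_sum fun s _ => hbound s
        _ = Z * q + (Finset.univ.filter fun s : Fin m → F => ¬ eval s c = 0).card * t := by
            rw [Finset.sum_ite]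
            simp [mul_comm]
            exact Or.inl rfl
        _ ≤ Z * q + q ^ m * t := by
            gcongr
            exact (Finset.card_filter_le _ _).trans (by simp [hq])
    have hqm : q ^ (m + 1) = q ^ m * q := pow_succ q m
    calc (∑ s : Fin m → F, (Finset.univ.filter fun y : F =>
            Polynomial.eval y (Polynomial.map (eval s) p) = 0).card) * q
        ≤ (Z * q + q ^ m * t) * q := Nat.mul_le_mul_right _ hsum
      _ ≤ (c.totalDegree * q ^ m + q ^ m * t) * q := by gcongr
      _ = (c.totalDegree + t) * q ^ (m + 1) := by ring
      _ ≤ Q.totalDegree * q ^ (m + 1) := Nat.mul_le_mul_right _ hdegc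


lemma exists_reduced (n : ℕ) (f : (Fin n → F) → F) :
    ∃ Q : MvPolynomial (Fin n) F, ReducedPoly F Q ∧ Represents F Q f := by
  have htop := MvPolynomial.map_restrict_dom_evalₗ F (Fin n)
  have hf : f ∈ (restrictDegree (Fin n) F (Fintype.card F - 1)).map (evalₗ F (Fin n)) := by
    rw [htop]; trivial
  obtain ⟨Q, hQmem, hQeval⟩ := Submodule.mem_map.mp hf
  refine ⟨Q, ?_, ?_⟩
  · intro i
    rw [MvPolynomial.degreeOf_le_iff]
    intro s hs
    exact (MvPolynomial.mem_restrictDegree _ _ _).mp hQmem s hs i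
  · intro x
    exact congrFun hQeval x

theorem schwartz_zippel_decomposition (n k d : ℕ)
    (P : (Fin n → F) → F) (hP : P ≠ fun _ => 0) (hdeg : degF F P ≤ d)
    (G : (Fin k → F) → F) (X : Fin k → (Fin n → F) → F)
    (hdecomp : ∀ x, G (fun i => X i x) = P x) :
    ∃ y : Fin k → F, G y ≠ 0 ∧
      ((Nat.card {z : Fin k → F // G z ≠ 0} : ℝ) / (Fintype.card F : ℝ) ^ k) * prEq F X y ≥
        (1 - (d : ℝ) / (Fintype.card F : ℝ)) / (Fintype.card F : ℝ) ^ k := by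
  classical
  set q := Fintype.card F with hq
  have hq0 : 0 < q := Fintype.card_pos
  have hqR : (0:ℝ) < (q:ℝ) := by exact_mod_cast hq0
  have hqne : (q:ℝ) ≠ 0 := ne_of_gt hqR
  obtain ⟨x₀, hx₀⟩ : ∃ x, P x ≠ 0 := by
    by_contra h; push_neg at h; exact hP (funext h)
  set S := Finset.univ.filter (fun y : Fin k → F => G y ≠ 0) with hS
  have hy₀ : (fun i => X i x₀) ∈ S := by
    simp only [hS, Finset.mem_filter, Finset.mem_univ, true_and]
    rw [hdecomp x₀]; exact hx₀
  set cnt : (Fin k → F) → ℕ :=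
    fun y => (Finset.univ.filter fun x : Fin n → F => (fun i => X i x) = y).card with hcnt
  obtain ⟨y, hyS, hymax⟩ := Finset.exists_max_image S cnt ⟨_, hy₀⟩
  have hGy : G y ≠ 0 := by
    have := hyS; simp only [hS, Finset.mem_filter] at this; exact this.2
  refine ⟨y, hGy, ?_⟩
  set N := S.card with hNdef
  set M := cnt y with hMdef
  -- identify Nat.card quantities
  have hN : (Nat.card {z : Fin k → F // G z ≠ 0}) = N := by
    rw [Nat.card_eq_fintype_card, Fintype.card_subtype]
  have hprEq : prEq F X y = (M : ℝ) / (q:ℝ)^n := by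
    rw [prEq, Nat.card_eq_fintype_card, Fintype.card_subtype]
    have : (Finset.univ.filter fun x : Fin n → F => ∀ i, X i x = y i)
        = (Finset.univ.filter fun x : Fin n → F => (fun i => X i x) = y) := by
      apply Finset.filter_congr
      intro x _
      simp [funext_iff]
    rw [this]
  -- counting: nonzeros of P vs fibers
  set A := (Finset.univ.filter fun x : Fin n → F => P x ≠ 0).card with hA
  set Z0 := (Finset.univ.filter fun x : Fin n → F => P x = 0).card with hZ0def
  have hcount : A ≤ N * M := by
    have hmap : ∀ x ∈ (Finset.univ.filter fun x : Fin n → F => P x ≠ 0),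
        (fun i => X i x) ∈ S := by
      intro x hx
      simp only [Finset.mem_filter, Finset.mem_univ, true_and] at hx
      simp only [hS, Finset.mem_filter, Finset.mem_univ, true_and]
      rw [hdecomp x]; exact hx
    rw [hA, Finset.card_eq_sum_card_fiberwise hmap]
    calc ∑ b ∈ S, ((Finset.univ.filter fun x : Fin n → F => P x ≠ 0).filter
            fun x => (fun i => X i x) = b).card
        ≤ ∑ b ∈ S, M := by
          apply Finset.sum_le_sum
          intro b hb
          refine le_trans ?_ (hymax b hb)
          exact Finset.card_le_card (Finset.filter_subset_filter _ (Finset.subset_univ _))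
      _ = N * M := by rw [Finset.sum_const, smul_eq_mul]
  have hsplit : Z0 + A = q ^ n := by
    rw [hZ0def, hA, Finset.card_filter_add_card_filter_not]
    rw [Finset.card_univ]
    simp [hq, Fintype.card_fun]
  -- Schwartz-Zippel bound on Z0
  have hTne : ∃ e, e ∈ {e | ∃ Q : MvPolynomial (Fin n) F,
      ReducedPoly F Q ∧ Represents F Q P ∧ Q.totalDegree = e} := by
    obtain ⟨Q, h1, h2⟩ := exists_reduced F n P
    exact ⟨Q.totalDegree, Q, h1, h2, rfl⟩
  have hmem := Nat.sInf_mem hTne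
  obtain ⟨Q, hQred, hQrep, hQdeg⟩ := hmem
  have hQd : Q.totalDegree ≤ d := by rw [hQdeg]; exact hdeg
  have hQne : Q ≠ 0 := by
    intro h0
    apply hx₀
    rw [← hQrep x₀, h0, map_zero]
  have hZ0 : Z0 * q ≤ d * q ^ n := by
    have hsz := sz_aux F n Q hQne
    have : (Finset.univ.filter fun x : Fin n → F => MvPolynomial.eval x Q = 0)
        = (Finset.univ.filter fun x : Fin n → F => P x = 0) := by
      apply Finset.filter_congr
      intro x _
      rw [hQrep x]
    rw [this] at hsz
    calc Z0 * q ≤ Q.totalDegree * q ^ n := hsz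
      _ ≤ d * q ^ n := Nat.mul_le_mul_right _ hQd
  -- real arithmetic
  have hAR : (A:ℝ) ≤ (N:ℝ) * M := by exact_mod_cast hcount
  have hsplitR : (Z0:ℝ) + A = (q:ℝ)^n := by exact_mod_cast hsplit
  have hZ0R : (Z0:ℝ) * q ≤ (d:ℝ) * (q:ℝ)^n := by exact_mod_cast hZ0
  have hZ2 : (Z0:ℝ) ≤ (d:ℝ)/q * (q:ℝ)^n := by
    rw [div_mul_eq_mul_div, le_div_iff₀ hqR]
    linarith
  have h1 : 1 - (d:ℝ)/q ≤ (N:ℝ) * M / (q:ℝ)^n := by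
    rw [le_div_iff₀ (pow_pos hqR n), sub_mul, one_mul]
    linarith
  rw [hN, hprEq, ge_iff_le]
  have heq : (N:ℝ)/(q:ℝ)^k * ((M:ℝ)/(q:ℝ)^n) = ((N:ℝ) * M / (q:ℝ)^n) / (q:ℝ)^k := by
    ring
  rw [heq]
  exact (div_le_div_iff_of_pos_right (pow_pos hqR k)).mpr h1

end PaperDefs
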